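/- Let γ ∈ Π^s(p,q;M). Define γ̄ ∈ ℝ^{(m+1)×(n+1)} by: γ̄_{i,j} = γ_{i,j} for i ≤ m, j ≤ n; γ̄_{i,n+1} = p_i − Σ_{j=1}^n (M⊙γ)_{i,j} for i ≤ m; γ̄_{m+1,j} = q_j − Σ_{i=1}^m (M⊙γ)_{i,j} for j ≤ n; and γ̄_{m+1,n+1} = 0. Then γ̄ ∈ Π(p̄,q̄;M̄), and its cost satisfies ⟨M̄⊙γ̄, Ḡ⟩_F = Σ_{i,j} M_{i,j} γ_{i,j} G_{i,j} + ξ(‖p‖₁ + ‖q‖₁ − 2s). -/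
import Mathlib


open Finset

noncomputable section

variable {m n : ℕ}

/-- Mask matrix determined by the keypoint pair set `K`:
`M i j = 1` if `(i,j) ∈ K`; `M i j = 0` if `i ∈ I` or `j ∈ J` but `(i,j) ∉ K`;
`M i j = 1` otherwise. -/
def mask (K : Finset (Fin m × Fin n)) : Matrix (Fin m) (Fin n) ℝ :=
  fun i j =>
    if (i, j) ∈ K then 1
    else if (∃ j', (i, j') ∈ K) ∨ (∃ i', (i', j) ∈ K) then 0
    else 1

/-- The masked feasible set `Π(p, q; M)`. -/
def PiM (M : Matrix (Fin m) (Fin n) ℝ) (p : Fin m → ℝ) (q : Fin n → ℝ) :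
    Set (Matrix (Fin m) (Fin n) ℝ) :=
  {π | (∀ i j, 0 ≤ π i j) ∧ (∀ i, ∑ j, M i j * π i j = p i) ∧
    (∀ j, ∑ i, M i j * π i j = q j)}

/-- Extend an `m × n` matrix by one extra column, one extra row and a corner entry. -/
def extend (B : Matrix (Fin m) (Fin n) ℝ) (col : Fin m → ℝ) (row : Fin n → ℝ)
    (corner : ℝ) : Matrix (Fin (m + 1)) (Fin (n + 1)) ℝ :=
  fun i j =>
    if hi : (i : ℕ) < m then
      if hj : (j : ℕ) < n then B ⟨i, hi⟩ ⟨j, hj⟩ else col ⟨i, hi⟩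
    else if hj : (j : ℕ) < n then row ⟨j, hj⟩ else corner

/-- Extend a vector by one extra entry. -/
def extVec (v : Fin m → ℝ) (last : ℝ) : Fin (m + 1) → ℝ :=
  fun i => if hi : (i : ℕ) < m then v ⟨i, hi⟩ else last

/-- `a i = 0` if `i ∈ I` and `1` otherwise. -/
def avec (K : Finset (Fin m × Fin n)) : Fin m → ℝ :=
  fun i => if ∃ j, (i, j) ∈ K then 0 else 1

/-- `b j = 0` if `j ∈ J` and `1` otherwise. -/
def bvec (K : Finset (Fin m × Fin n)) : Fin n → ℝ :=
  fun j => if ∃ i, (i, j) ∈ K then 0 else 1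

/-- The extended mask `M̄`. -/
def Mbar (K : Finset (Fin m × Fin n)) : Matrix (Fin (m + 1)) (Fin (n + 1)) ℝ :=
  extend (mask K) (avec K) (bvec K) 1

/-- The extended guiding matrix `Ḡ`. -/
def Gbar (G : Matrix (Fin m) (Fin n) ℝ) (ξ A : ℝ) :
    Matrix (Fin (m + 1)) (Fin (n + 1)) ℝ :=
  extend G (fun _ => ξ) (fun _ => ξ) (2 * ξ + A)

/-- The extended source weights `p̄ = (pᵀ, ‖q‖₁ − s)ᵀ`. -/
def pbar (p : Fin m → ℝ) (q : Fin n → ℝ) (s : ℝ) : Fin (m + 1) → ℝ :=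
  extVec p (∑ j, q j - s)

/-- The extended target weights `q̄ = (qᵀ, ‖p‖₁ − s)ᵀ`. -/
def qbar (p : Fin m → ℝ) (q : Fin n → ℝ) (s : ℝ) : Fin (n + 1) → ℝ :=
  extVec q (∑ i, p i - s)

/-- The partial masked feasible set `Π^s(p, q; M)`. -/
def PiPartial (K : Finset (Fin m × Fin n)) (p : Fin m → ℝ) (q : Fin n → ℝ) (s : ℝ) :
    Set (Matrix (Fin m) (Fin n) ℝ) :=
  {π | (∀ i j, 0 ≤ π i j) ∧ (∀ i, ∑ j, mask K i j * π i j ≤ p i) ∧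
    (∀ j, ∑ i, mask K i j * π i j ≤ q j) ∧
    (∑ i, ∑ j, mask K i j * π i j = s) ∧
    (∀ i, (∃ j, (i, j) ∈ K) → ∑ j, mask K i j * π i j = p i) ∧
    (∀ j, (∃ i, (i, j) ∈ K) → ∑ i, mask K i j * π i j = q j)}


lemma extend_cc (B : Matrix (Fin m) (Fin n) ℝ) (c : Fin m → ℝ) (r : Fin n → ℝ) (k : ℝ)
    (i : Fin m) (j : Fin n) :
    extend B c r k i.castSucc j.castSucc = B i j := by
  simp [extend, i.is_lt, j.is_lt]

lemma extend_cl (B : Matrix (Fin m) (Fin n) ℝ) (c : Fin m → ℝ) (r : Fin n → ℝ) (k : ℝ)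
    (i : Fin m) :
    extend B c r k i.castSucc (Fin.last n) = c i := by
  simp [extend, i.is_lt]

lemma extend_lc (B : Matrix (Fin m) (Fin n) ℝ) (c : Fin m → ℝ) (r : Fin n → ℝ) (k : ℝ)
    (j : Fin n) :
    extend B c r k (Fin.last m) j.castSucc = r j := by
  simp [extend, j.is_lt]

lemma extend_ll (B : Matrix (Fin m) (Fin n) ℝ) (c : Fin m → ℝ) (r : Fin n → ℝ) (k : ℝ) :
    extend B c r k (Fin.last m) (Fin.last n) = k := by
  simp [extend]

lemma extVec_c (v : Fin m → ℝ) (last : ℝ) (i : Fin m) :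
    extVec v last i.castSucc = v i := by simp [extVec, i.is_lt]

lemma extVec_l (v : Fin m → ℝ) (last : ℝ) :
    extVec v last (Fin.last m) = last := by simp [extVec]

/-- a partial plan `γ ∈ Π^s(p,q;M)`, extended by sending the surplus
row/column mass to the dummy points and zero dummy-to-dummy mass, is feasible for
the extended problem, and its extended cost is the cost of `γ` plus
`ξ(‖p‖₁ + ‖q‖₁ − 2s)`. -/
theorem extend_partial_plan_feasible_and_cost
    (p : Fin m → ℝ) (q : Fin n → ℝ) (K : Finset (Fin m × Fin n)) (s : ℝ)
    (G : Matrix (Fin m) (Fin n) ℝ) (ξ A : ℝ)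
    (hp : ∀ i, 0 ≤ p i) (hq : ∀ j, 0 ≤ q j)
    (hK1 : ∀ a ∈ K, ∀ b ∈ K, a.1 = b.1 → a = b)
    (hK2 : ∀ a ∈ K, ∀ b ∈ K, a.2 = b.2 → a = b)
    (hs0 : 0 ≤ s) (hs : s ≤ min (∑ i, p i) (∑ j, q j))
    (γ : Matrix (Fin m) (Fin n) ℝ) (hγ : γ ∈ PiPartial K p q s) :
    extend γ (fun i => p i - ∑ j, mask K i j * γ i j)
        (fun j => q j - ∑ i, mask K i j * γ i j) 0
      ∈ PiM (Mbar K) (pbar p q s) (qbar p q s)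
    ∧ ∑ i, ∑ j, Mbar K i j
          * extend γ (fun i => p i - ∑ j', mask K i j' * γ i j')
              (fun j => q j - ∑ i', mask K i' j * γ i' j) 0 i j
          * Gbar G ξ A i j
        = (∑ i : Fin m, ∑ j : Fin n, mask K i j * γ i j * G i j)
          + ξ * ((∑ i, p i) + (∑ j, q j) - 2 * s) := by
  obtain ⟨hpos, hrow, hcol, htot, hI, hJ⟩ := hγ
  set R : Fin m → ℝ := fun i => ∑ j, mask K i j * γ i j with hR
  set C : Fin n → ℝ := fun j => ∑ i, mask K i j * γ i j with hC
  have htotC : ∑ j, C j = s := by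
    rw [← htot]; exact Finset.sum_comm
  -- key per-row / per-column facts
  have rowkey : ∀ i : Fin m, avec K i * (p i - R i) = p i - R i := by
    intro i
    by_cases h : ∃ j, (i, j) ∈ K
    · have := hI i h
      simp [avec, h, hR] at *
      rw [this]; ring
    · simp [avec, h]
  have colkey : ∀ j : Fin n, bvec K j * (q j - C j) = q j - C j := by
    intro j
    by_cases h : ∃ i, (i, j) ∈ K
    · have := hJ j h
      simp [bvec, h, hC] at *
      rw [this]; ring
    · simp [bvec, h]
  have rowsum : ∀ i : Fin m, R i + avec K i * (p i - R i) = p i := by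
    intro i; rw [rowkey]; ring
  have colsum : ∀ j : Fin n, C j + bvec K j * (q j - C j) = q j := by
    intro j; rw [colkey]; ring
  refine ⟨⟨?_, ?_, ?_⟩, ?_⟩
  · -- nonneg
    intro i j
    refine Fin.lastCases ?_ ?_ i <;> [skip; intro i'] <;>
      refine Fin.lastCases ?_ ?_ j <;> [skip; intro j'; skip; intro j']
    · rw [extend_ll]
    · rw [extend_lc]; have := hcol j'; simpa [hC] using sub_nonneg.2 this
    · rw [extend_cl]; have := hrow i'; simpa [hR] using sub_nonneg.2 this
    · rw [extend_cc]; exact hpos i' j'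
  · -- rows
    intro i
    refine Fin.lastCases ?_ (fun i' => ?_) i
    · rw [Fin.sum_univ_castSucc]
      simp only [Mbar, extend_lc, extend_ll, extend_cl, extend_cc]
      rw [pbar, extVec_l]
      simp only [mul_one, mul_zero, add_zero, one_mul]
      calc ∑ j : Fin n, bvec K j * (q j - C j)
          = ∑ j : Fin n, (q j - C j) := by
            exact Finset.sum_congr rfl fun j _ => colkey j
        _ = ∑ j, q j - s := by rw [Finset.sum_sub_distrib, htotC]
    · rw [Fin.sum_univ_castSucc]
      simp only [Mbar, extend_cc, extend_cl]
      rw [pbar, extVec_c]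
      exact rowsum i'
  · -- cols
    intro j
    refine Fin.lastCases ?_ (fun j' => ?_) j
    · rw [Fin.sum_univ_castSucc]
      simp only [Mbar, extend_cl, extend_ll]
      rw [qbar, extVec_l]
      simp only [mul_one, mul_zero, add_zero, one_mul]
      calc ∑ i : Fin m, avec K i * (p i - R i)
          = ∑ i : Fin m, (p i - R i) := by
            exact Finset.sum_congr rfl fun i _ => rowkey i
        _ = ∑ i, p i - s := by rw [Finset.sum_sub_distrib, htot]
    · rw [Fin.sum_univ_castSucc]
      simp only [Mbar, extend_cc, extend_lc]
      rw [qbar, extVec_c]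
      exact colsum j'
  · -- cost
    rw [Fin.sum_univ_castSucc]
    have hlast : ∑ j : Fin (n+1), Mbar K (Fin.last m) j
        * extend γ (fun i => p i - ∑ j', mask K i j' * γ i j')
            (fun j => q j - ∑ i', mask K i' j * γ i' j) 0 (Fin.last m) j
        * Gbar G ξ A (Fin.last m) j
        = ξ * (∑ j, q j - s) := by
      rw [Fin.sum_univ_castSucc]
      simp only [Mbar, Gbar, extend_lc, extend_ll, mul_zero, zero_mul, mul_one, add_zero,
        one_mul]
      calc ∑ j : Fin n, bvec K j * (q j - C j) * ξ
          = ∑ j : Fin n, (q j - C j) * ξ := by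
            exact Finset.sum_congr rfl fun j _ => by rw [colkey]
        _ = (∑ j, q j - s) * ξ := by rw [← Finset.sum_mul, Finset.sum_sub_distrib, htotC]
        _ = ξ * (∑ j, q j - s) := mul_comm _ _
    rw [hlast]
    have hmain : ∑ i : Fin m, ∑ j : Fin (n+1), Mbar K i.castSucc j
        * extend γ (fun i => p i - ∑ j', mask K i j' * γ i j')
            (fun j => q j - ∑ i', mask K i' j * γ i' j) 0 i.castSucc j
        * Gbar G ξ A i.castSucc j
        = (∑ i : Fin m, ∑ j : Fin n, mask K i j * γ i j * G i j) + ξ * (∑ i, p i - s) := by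
      have hrow' : ∀ i : Fin m, ∑ j : Fin (n+1), Mbar K i.castSucc j
          * extend γ (fun i => p i - ∑ j', mask K i j' * γ i j')
              (fun j => q j - ∑ i', mask K i' j * γ i' j) 0 i.castSucc j
          * Gbar G ξ A i.castSucc j
          = (∑ j : Fin n, mask K i j * γ i j * G i j) + (p i - R i) * ξ := by
        intro i
        rw [Fin.sum_univ_castSucc]
        simp only [Mbar, Gbar, extend_cc, extend_cl]
        congr 1
        rw [rowkey i]
      rw [Finset.sum_congr rfl fun i _ => hrow' i, Finset.sum_add_distrib,
        ← Finset.sum_mul, Finset.sum_sub_distrib, htot, mul_comm]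
    rw [hmain]
    ring
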